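/- Let Π = (P, 𝓛) be a finite projective plane of order n with n prime, let m ≥ 1, and suppose there exists a non-constant line-invariant function v : P → ℤ/mℤ. Then n divides m. -/
import Mathlib

open Configuration

/-- The sum of `v` over the points of the line `l`. -/
noncomputable def lineSum {P L G : Type*} [Membership P L] [AddCommMonoid G]
    (v : P → G) (l : L) : G :=
  ∑ᶠ x ∈ {x : P | x ∈ l}, v x

/-- `v : P → G` is line invariant if its sum along every line of `L` is the same. -/
def LineInvariant (P L : Type*) {G : Type*} [Membership P L] [AddCommMonoid G]
    (v : P → G) : Prop :=
  ∀ l l' : L, lineSum v l = lineSum v l'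

open scoped Classical in
lemma lineSum_eq {P L G : Type*} [Membership P L] [Fintype P] [AddCommMonoid G]
    (v : P → G) (l : L) :
    lineSum v l = ∑ x ∈ Finset.univ.filter (· ∈ l), v x := by
  rw [lineSum, ← finsum_mem_coe_finset]
  congr 1
  simp

open scoped Classical in
lemma key_sum {P L G : Type*} [Membership P L] [Fintype P] [Fintype L]
    [ProjectivePlane P L] [AddCommGroup G] (v : P → G) (p : P) :
    ∑ l ∈ Finset.univ.filter (fun l : L => p ∈ l), lineSum v l
      = (lineCount L p) • v p + ∑ x ∈ Finset.univ.erase p, v x := by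
  have hcard : ∀ x : P, x ≠ p →
      ((Finset.univ.filter (fun l : L => p ∈ l)).filter (fun l : L => x ∈ l)).card = 1 := by
    intro x hx
    rw [Finset.card_eq_one]
    refine ⟨HasLines.mkLine hx.symm, ?_⟩
    ext l
    simp only [Finset.mem_filter, Finset.mem_univ, true_and, Finset.mem_singleton]
    constructor
    · rintro ⟨hpl, hxl⟩
      exact ((Nondegenerate.eq_or_eq hpl hxl (HasLines.mkLine_ax hx.symm).1
        (HasLines.mkLine_ax hx.symm).2).resolve_left (Ne.symm hx))
    · rintro rfl
      exact ⟨(HasLines.mkLine_ax hx.symm).1, (HasLines.mkLine_ax hx.symm).2⟩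
  calc ∑ l ∈ Finset.univ.filter (fun l : L => p ∈ l), lineSum v l
      = ∑ l ∈ Finset.univ.filter (fun l : L => p ∈ l), ∑ x : P, if x ∈ l then v x else 0 := by
        simp [lineSum_eq, Finset.sum_filter]
    _ = ∑ x : P, ∑ l ∈ Finset.univ.filter (fun l : L => p ∈ l), if x ∈ l then v x else 0 :=
        Finset.sum_comm
    _ = ∑ x : P, ((Finset.univ.filter (fun l : L => p ∈ l)).filter (fun l : L => x ∈ l)).card • v x := by
        refine Finset.sum_congr rfl fun x _ => ?_
        rw [← Finset.sum_filter, Finset.sum_const]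
    _ = (lineCount L p) • v p + ∑ x ∈ Finset.univ.erase p, v x := by
        rw [← Finset.add_sum_erase _ _ (Finset.mem_univ p)]
        congr 1
        · congr 1
          · rw [lineCount, Nat.card_eq_fintype_card, Fintype.card_subtype]
            congr 1
            ext l
            simp
        · refine Finset.sum_congr rfl fun x hx => ?_
          rw [hcard x (Finset.ne_of_mem_erase hx), one_smul]

/-- If a projective plane of prime order `n` is pseudomagic over `ℤ/mℤ`, then `n ∣ m`. -/
theorem stmt_9 {P L : Type*} [Membership P L] [Fintype P] [Fintype L]
    [ProjectivePlane P L] {n : ℕ} (hn : ProjectivePlane.order P L = n) (hp : n.Prime)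
    (m : ℕ) (hm : 1 ≤ m)
    (h : ∃ v : P → ZMod m, LineInvariant P L v ∧ ¬ ∀ a b : P, v a = v b) :
    n ∣ m := by
  classical
  obtain ⟨v, hinv, hnc⟩ := h
  push_neg at hnc
  obtain ⟨a, b, hab⟩ := hnc
  have hab' : a ≠ b := fun h => hab (by rw [h])
  set l₀ : L := HasLines.mkLine hab'
  set s : ZMod m := lineSum v l₀ with hs
  set T : ZMod m := ∑ x : P, v x with hT
  have hkey : ∀ p : P, (n : ZMod m) * v p + T = ((n : ZMod m) + 1) * s := by
    intro p
    have h1 := key_sum (L := L) v p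
    have h2 : ∑ l ∈ Finset.univ.filter (fun l : L => p ∈ l), lineSum v l
        = (Finset.univ.filter (fun l : L => p ∈ l)).card • s := by
      rw [← Finset.sum_const]
      exact Finset.sum_congr rfl fun l _ => hinv l l₀
    have hc : (Finset.univ.filter (fun l : L => p ∈ l) : Finset L).card = lineCount L p := by
      rw [lineCount, Nat.card_eq_fintype_card, Fintype.card_subtype]
    have hlc : lineCount L p = n + 1 := by
      rw [ProjectivePlane.lineCount_eq, hn]
    have herase : ∑ x ∈ Finset.univ.erase p, v x = T - v p := by
      rw [hT, ← Finset.add_sum_erase _ _ (Finset.mem_univ p)]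
      ring
    rw [h2, hc, hlc, herase] at h1
    push_cast [nsmul_eq_mul] at h1
    linear_combination -h1
  have hab0 : (n : ZMod m) * (v a - v b) = 0 := by
    have ha := hkey a
    have hb := hkey b
    linear_combination ha - hb
  set d : ZMod m := v a - v b with hd
  have hd0 : d ≠ 0 := sub_ne_zero.mpr hab
  haveI : NeZero m := ⟨by omega⟩
  have hdvd : m ∣ n * d.val := by
    have : ((n * d.val : ℕ) : ZMod m) = 0 := by
      push_cast
      rw [ZMod.natCast_val, ZMod.cast_id]
      exact hab0
    exact (ZMod.natCast_eq_zero_iff _ _).mp this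
  by_contra hnm
  have hcop : Nat.Coprime n m := (Nat.Prime.coprime_iff_not_dvd hp).mpr hnm
  have : m ∣ d.val := (Nat.Coprime.dvd_of_dvd_mul_left hcop.symm) hdvd
  have hlt : d.val < m := ZMod.val_lt d
  have hne : d.val ≠ 0 := fun h => hd0 ((ZMod.val_eq_zero d).mp h)
  have := Nat.le_of_dvd (Nat.pos_of_ne_zero hne) this
  omega
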